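/- First-order expansion of the perturbed critical point: Suppose θ* ∈ S. Then there exist μ* > 0, C > 0, and a continuously differentiable curve μ ↦ θ̂_μ defined on [0, μ*) with θ̂_0 = θ*, such that for every μ ∈ (0, μ*): θ̂_μ ∈ S, ∇Ĵ_μ(θ̂_μ) = 0, and ‖θ̂_μ − θ* − μ·(1/h(θ*))·H⁻¹∇h(θ*)‖ ≤ C·μ². In particular θ̂_μ = θ* + μ·H⁻¹∇h(θ*)/h(θ*) + O(μ²). -/

import Mathlib

open Real Set
open scoped RealInnerProductSpace

section Aux
variable {n : ℕ}

private theorem quad_grad' (θs θ : EuclideanSpace ℝ (Fin n))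
    (H : EuclideanSpace ℝ (Fin n) →L[ℝ] EuclideanSpace ℝ (Fin n))
    (Hsymm : ∀ x y : EuclideanSpace ℝ (Fin n), ⟪H x, y⟫ = ⟪x, H y⟫) (Jstar : ℝ) :
    HasGradientAt (fun θ => Jstar + (1 / 2) * ⟪θ - θs, H (θ - θs)⟫) (H (θ - θs)) θ := by
  have h1 : HasFDerivAt (fun θ : EuclideanSpace ℝ (Fin n) => θ - θs)
      (ContinuousLinearMap.id ℝ (EuclideanSpace ℝ (Fin n))) θ :=
    (hasFDerivAt_id θ).sub_const θs
  have h2 : HasFDerivAt (fun θ : EuclideanSpace ℝ (Fin n) => H (θ - θs))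
      (H : EuclideanSpace ℝ (Fin n) →L[ℝ] EuclideanSpace ℝ (Fin n)) θ :=
    H.hasFDerivAt.comp θ h1
  have h3 := (h1.inner ℝ h2)
  have h4 := ((h3.const_mul ((1:ℝ)/2)).const_add Jstar)
  have h5 := h4.hasGradientAt
  convert h5 using 1
  apply (InnerProductSpace.toDual ℝ (EuclideanSpace ℝ (Fin n))).injective
  rw [LinearIsometryEquiv.apply_symm_apply]
  ext v
  simp only [InnerProductSpace.toDual_apply_apply, ContinuousLinearMap.coe_smul',
    Pi.smul_apply, ContinuousLinearMap.coe_comp', Function.comp_apply,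
    fderivInnerCLM_apply, ContinuousLinearMap.prod_apply,
    ContinuousLinearMap.coe_id', id, smul_eq_mul]
  rw [← Hsymm (θ - θs) v, real_inner_comm v (H (θ - θs))]
  ring

private theorem log_grad' (h : EuclideanSpace ℝ (Fin n) → ℝ) (θ : EuclideanSpace ℝ (Fin n))
    (hd : DifferentiableAt ℝ h θ) (hne : h θ ≠ 0) :
    HasGradientAt (fun θ => Real.log (h θ)) ((h θ)⁻¹ • gradient h θ) θ := by
  have h3 : HasFDerivAt (fun θ => Real.log (h θ)) ((h θ)⁻¹ • fderiv ℝ h θ) θ :=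
    (Real.hasDerivAt_log hne).comp_hasFDerivAt θ hd.hasFDerivAt
  have h4 := h3.hasGradientAt
  convert h4 using 1
  rw [map_smul]
  rfl

private theorem G_smooth' (h : EuclideanSpace ℝ (Fin n) → ℝ) (hh : ContDiff ℝ 2 h)
    (θ : EuclideanSpace ℝ (Fin n)) (hne : h θ ≠ 0) :
    ContDiffAt ℝ 1 (fun θ => (h θ)⁻¹ • gradient h θ) θ := by
  have hgrad : ContDiff ℝ 1 (fun θ => gradient h θ) := by
    have hf : ContDiff ℝ 1 (fderiv ℝ h) := hh.fderiv_right (by norm_num)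
    exact (InnerProductSpace.toDual ℝ (EuclideanSpace ℝ (Fin n))).symm.contDiff.comp hf
  have hinv : ContDiffAt ℝ 1 (fun θ => (h θ)⁻¹) θ :=
    ((hh.of_le (by norm_num)).contDiffAt).inv hne
  exact hinv.smul hgrad.contDiffAt

private theorem Hinj' (H : EuclideanSpace ℝ (Fin n) →L[ℝ] EuclideanSpace ℝ (Fin n))
    (Hpos : ∀ x : EuclideanSpace ℝ (Fin n), x ≠ 0 → 0 < ⟪x, H x⟫) :
    Function.Injective ⇑H := by
  intro x y hxy
  by_contra hne
  have hz : x - y ≠ 0 := sub_ne_zero.mpr hne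
  have := Hpos (x - y) hz
  rw [map_sub, hxy, sub_self, inner_zero_right] at this
  exact lt_irrefl 0 this

private noncomputable def Heqv' (H : EuclideanSpace ℝ (Fin n) →L[ℝ] EuclideanSpace ℝ (Fin n))
    (Hpos : ∀ x : EuclideanSpace ℝ (Fin n), x ≠ 0 → 0 < ⟪x, H x⟫) :
    EuclideanSpace ℝ (Fin n) ≃L[ℝ] EuclideanSpace ℝ (Fin n) :=
  ContinuousLinearEquiv.ofBijective H
    (LinearMap.ker_eq_bot.mpr (Hinj' H Hpos))
    (LinearMap.range_eq_top.mpr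
      ((LinearMap.injective_iff_surjective
        (f := (H : EuclideanSpace ℝ (Fin n) →ₗ[ℝ] EuclideanSpace ℝ (Fin n)))).mp (Hinj' H Hpos)))

private theorem Heqv'_coe (H : EuclideanSpace ℝ (Fin n) →L[ℝ] EuclideanSpace ℝ (Fin n))
    (Hpos : ∀ x : EuclideanSpace ℝ (Fin n), x ≠ 0 → 0 < ⟪x, H x⟫) :
    ⇑(Heqv' H Hpos) = ⇑H := ContinuousLinearEquiv.coeFn_ofBijective ..

private noncomputable def shear' (g : EuclideanSpace ℝ (Fin n)) :
    (ℝ × EuclideanSpace ℝ (Fin n)) ≃L[ℝ] (ℝ × EuclideanSpace ℝ (Fin n)) :=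
  ContinuousLinearEquiv.equivOfInverse
    ((ContinuousLinearMap.fst ℝ ℝ _).prod
      (ContinuousLinearMap.snd ℝ ℝ _ - (ContinuousLinearMap.fst ℝ ℝ _).smulRight g))
    ((ContinuousLinearMap.fst ℝ ℝ _).prod
      (ContinuousLinearMap.snd ℝ ℝ _ + (ContinuousLinearMap.fst ℝ ℝ _).smulRight g))
    (fun p => by simp) (fun p => by simp)

private theorem shear'_apply (g : EuclideanSpace ℝ (Fin n)) (p : ℝ × EuclideanSpace ℝ (Fin n)) :
    shear' g p = (p.1, p.2 - p.1 • g) := rfl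

end Aux

set_option maxHeartbeats 2000000

theorem first_order_expansion_of_critical_point
    {n : ℕ} (hn : 1 ≤ n)
    (Jstar : ℝ) (θs : EuclideanSpace ℝ (Fin n))
    (H : EuclideanSpace ℝ (Fin n) →L[ℝ] EuclideanSpace ℝ (Fin n))
    (Hsymm : ∀ x y : EuclideanSpace ℝ (Fin n), ⟪H x, y⟫ = ⟪x, H y⟫)
    (Hpos : ∀ x : EuclideanSpace ℝ (Fin n), x ≠ 0 → 0 < ⟪x, H x⟫)
    (J : EuclideanSpace ℝ (Fin n) → ℝ)
    (hJdef : ∀ θ, J θ = Jstar + (1 / 2) * ⟪θ - θs, H (θ - θs)⟫)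
    (h : EuclideanSpace ℝ (Fin n) → ℝ) (hh : ContDiff ℝ 2 h)
    (S : Set (EuclideanSpace ℝ (Fin n))) (hSdef : S = {θ | 0 < h θ})
    (hSne : S.Nonempty)
    (Jhat : ℝ → EuclideanSpace ℝ (Fin n) → ℝ)
    (hJhatdef : ∀ μ θ, Jhat μ θ = J θ - μ * Real.log (h θ))
    (hθsS : θs ∈ S) :
    ∃ μstar > 0, ∃ C > 0, ∃ θhat : ℝ → EuclideanSpace ℝ (Fin n),
      ContDiffOn ℝ 1 θhat (Set.Ico 0 μstar) ∧ θhat 0 = θs ∧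
      ∃ w : EuclideanSpace ℝ (Fin n), H w = gradient h θs ∧
        ∀ μ ∈ Set.Ioo 0 μstar,
          θhat μ ∈ S ∧ gradient (Jhat μ) (θhat μ) = 0 ∧
          ‖θhat μ - θs - (μ / h θs) • w‖ ≤ C * μ ^ 2 := by
  have hθs0 : 0 < h θs := by rw [hSdef] at hθsS; exact hθsS
  set G : EuclideanSpace ℝ (Fin n) → EuclideanSpace ℝ (Fin n) :=
    fun θ => (h θ)⁻¹ • gradient h θ with hGdef
  have hGcd : ContDiffAt ℝ 1 G θs := G_smooth' h hh θs hθs0.ne'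
  set Heq := Heqv' H Hpos with hHeq
  -- the map Φ
  set Φ : ℝ × EuclideanSpace ℝ (Fin n) → ℝ × EuclideanSpace ℝ (Fin n) :=
    fun p => (p.1, H (p.2 - θs) - p.1 • G p.2) with hΦdef
  have hΦcd : ContDiffAt ℝ 1 Φ (0, θs) := by
    apply ContDiffAt.prodMk contDiffAt_fst
    apply ContDiffAt.sub
    · exact (H.contDiff.comp (contDiff_snd.sub contDiff_const)).contDiffAt
    · exact ContDiffAt.smul (f := fun p : ℝ × EuclideanSpace ℝ (Fin n) => p.1)
        (g := fun p : ℝ × EuclideanSpace ℝ (Fin n) => G p.2) contDiffAt_fst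
        (ContDiffAt.comp (g := G) (f := Prod.snd) (0, θs) hGcd contDiffAt_snd)
  set A : (ℝ × EuclideanSpace ℝ (Fin n)) ≃L[ℝ] (ℝ × EuclideanSpace ℝ (Fin n)) :=
    ((ContinuousLinearEquiv.refl ℝ ℝ).prodCongr Heq).trans (shear' (G θs)) with hA
  have hGdiff : DifferentiableAt ℝ G θs := hGcd.differentiableAt one_ne_zero
  have hΦ' : HasFDerivAt Φ (A : (ℝ × EuclideanSpace ℝ (Fin n)) →L[ℝ] _) (0, θs) := by
    have d1 : HasFDerivAt (fun p : ℝ × EuclideanSpace ℝ (Fin n) => H (p.2 - θs))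
        (H.comp (ContinuousLinearMap.snd ℝ ℝ _)) (0, θs) :=
      H.hasFDerivAt.comp _ (hasFDerivAt_snd.sub_const θs)
    have d2 : HasFDerivAt (fun p : ℝ × EuclideanSpace ℝ (Fin n) => p.1 • G p.2)
        (((0:ℝ), θs).1 • ((fderiv ℝ G θs).comp (ContinuousLinearMap.snd ℝ ℝ _))
          + (ContinuousLinearMap.fst ℝ ℝ _).smulRight (G ((0:ℝ), θs).2)) (0, θs) :=
      HasFDerivAt.smul (c := fun p : ℝ × EuclideanSpace ℝ (Fin n) => p.1)
        (f := fun p : ℝ × EuclideanSpace ℝ (Fin n) => G p.2) hasFDerivAt_fst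
        (HasFDerivAt.comp (g := G) (f := Prod.snd) _ hGdiff.hasFDerivAt hasFDerivAt_snd)
    have d3 := hasFDerivAt_fst.prodMk (d1.sub d2)
    refine HasFDerivAt.congr_fderiv d3 (Eq.symm ?_)
    refine ContinuousLinearMap.ext fun p => ?_
    have hAp : A p = (p.1, H p.2 - p.1 • G θs) := by
      show shear' (G θs) (((ContinuousLinearEquiv.refl ℝ ℝ).prodCongr Heq) p) = _
      rw [shear'_apply]
      simp [ContinuousLinearEquiv.prodCongr_apply, hHeq, Heqv'_coe]
    show A p = _
    rw [hAp]
    simp [ContinuousLinearMap.prod_apply]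
  have hΦ00 : Φ (0, θs) = (0, 0) := by simp [hΦdef]
  -- local inverse
  have hstrict := hΦcd.hasStrictFDerivAt' hΦ' one_ne_zero
  set Ψ : ℝ × EuclideanSpace ℝ (Fin n) → ℝ × EuclideanSpace ℝ (Fin n) :=
    hΦcd.localInverse hΦ' one_ne_zero with hΨdef
  have hΨcd : ContDiffAt ℝ 1 Ψ (0, 0) := by
    have := hΦcd.to_localInverse hΦ' one_ne_zero
    rwa [hΦ00] at this
  have hΨ0 : Ψ (0, 0) = (0, θs) := by
    have := hΦcd.localInverse_apply_image hΦ' one_ne_zero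
    rwa [hΦ00] at this
  have rightInv : ∀ᶠ y in nhds ((0:ℝ), (0:EuclideanSpace ℝ (Fin n))), Φ (Ψ y) = y := by
    have := hstrict.eventually_right_inverse
    rwa [hΦ00] at this
  -- the curve
  set θhat : ℝ → EuclideanSpace ℝ (Fin n) := fun μ => (Ψ (μ, 0)).2 with hθhatdef
  have hι : ContDiff ℝ 1 (fun μ : ℝ => ((μ, 0) : ℝ × EuclideanSpace ℝ (Fin n))) :=
    contDiff_id.prodMk contDiff_const
  have hθcd : ContDiffAt ℝ 1 θhat 0 := by
    have h1 : ContDiffAt ℝ 1 (Ψ ∘ (fun μ : ℝ => (μ, 0))) 0 :=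
      ContDiffAt.comp 0 hΨcd hι.contDiffAt
    exact ContDiffAt.comp 0 contDiffAt_snd h1
  have hθ0 : θhat 0 = θs := by show (Ψ (0, 0)).2 = θs; rw [hΨ0]
  have hθtendsto : Filter.Tendsto θhat (nhds 0) (nhds θs) := by
    have := hθcd.continuousAt.tendsto
    rwa [hθ0] at this
  -- Lipschitz constant and bound for G
  obtain ⟨K, t, ht, hlip⟩ := hGcd.exists_lipschitzOnWith
  have hθst : θs ∈ t := mem_of_mem_nhds ht
  set M : ℝ := ‖G θs‖ + 1 with hM
  have hM0 : 0 < M := by positivity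
  -- ContDiffOn neighborhood
  obtain ⟨u, hu, hcdon⟩ := hθcd.contDiffOn le_rfl (by simp)
  -- eventually facts
  have Ev1 : ∀ᶠ μ in nhds (0:ℝ), Φ (Ψ (μ, 0)) = (μ, 0) := by
    have hιt : Filter.Tendsto (fun μ : ℝ => ((μ, 0) : ℝ × EuclideanSpace ℝ (Fin n)))
        (nhds 0) (nhds (0, 0)) := by
      have := (hι.continuous).tendsto (0:ℝ)
      simpa using this
    exact hιt.eventually rightInv
  have Ev2 : ∀ᶠ μ in nhds (0:ℝ), 0 < h (θhat μ) := by
    have hopen : ∀ᶠ θ in nhds θs, 0 < h θ :=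
      (isOpen_lt continuous_const hh.continuous).eventually_mem hθs0
    exact hθtendsto.eventually hopen
  have Ev3 : ∀ᶠ μ in nhds (0:ℝ), θhat μ ∈ t := hθtendsto.eventually ht
  have Ev4 : ∀ᶠ μ in nhds (0:ℝ), ‖G (θhat μ)‖ ≤ M := by
    have hGt : Filter.Tendsto (fun μ => G (θhat μ)) (nhds 0) (nhds (G θs)) :=
      (hGcd.continuousAt.tendsto).comp hθtendsto
    have : ∀ᶠ y in nhds (G θs), ‖y‖ ≤ M := by
      have : ∀ᶠ y in nhds (G θs), y ∈ {y : EuclideanSpace ℝ (Fin n) | ‖y‖ < M} := by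
        apply (isOpen_lt continuous_norm continuous_const).eventually_mem
        simp [hM]
      exact this.mono fun y hy => le_of_lt hy
    exact hGt.eventually this
  have Ev5 : ∀ᶠ μ in nhds (0:ℝ), μ ∈ u := hu
  have EvAll := Ev1.and (Ev2.and (Ev3.and (Ev4.and Ev5)))
  obtain ⟨ε, hε, hball⟩ := Metric.eventually_nhds_iff.mp EvAll
  have hIco : ∀ μ ∈ Set.Ico (0:ℝ) ε, Φ (Ψ (μ, 0)) = (μ, 0) ∧ 0 < h (θhat μ) ∧
      θhat μ ∈ t ∧ ‖G (θhat μ)‖ ≤ M ∧ μ ∈ u := by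
    intro μ hμ
    have : dist μ 0 < ε := by
      rw [Real.dist_eq, sub_zero, abs_of_nonneg hμ.1]
      exact hμ.2
    exact hball this
  -- key equation
  have key : ∀ μ ∈ Set.Ico (0:ℝ) ε, H (θhat μ - θs) = μ • G (θhat μ) := by
    intro μ hμ
    have h1 := (hIco μ hμ).1
    have h2 : (Ψ (μ, 0)).1 = μ := congrArg Prod.fst h1
    have h3 : H ((Ψ (μ, 0)).2 - θs) - (Ψ (μ, 0)).1 • G ((Ψ (μ, 0)).2) = 0 :=
      congrArg Prod.snd h1
    rw [h2] at h3
    have := sub_eq_zero.mp h3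
    exact this
  -- constants
  set HS : EuclideanSpace ℝ (Fin n) →L[ℝ] EuclideanSpace ℝ (Fin n) :=
    (Heq.symm : EuclideanSpace ℝ (Fin n) →L[ℝ] EuclideanSpace ℝ (Fin n)) with hHS
  set C : ℝ := ‖HS‖ * ((K : ℝ) * (‖HS‖ * M)) + 1 with hC
  have hC0 : 0 < C := by positivity
  have hHcoe : ∀ x, Heq x = H x := fun x => congrFun (Heqv'_coe H Hpos) x
  refine ⟨ε, hε, C, hC0, θhat, hcdon.mono (fun μ hμ => (hIco μ hμ).2.2.2.2), hθ0,
    Heq.symm (gradient h θs), ?_, ?_⟩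
  · rw [← hHcoe]
    exact Heq.apply_symm_apply _
  intro μ hμ
  have hμIco : μ ∈ Set.Ico (0:ℝ) ε := ⟨le_of_lt hμ.1, hμ.2⟩
  obtain ⟨hEq1, hpos, hmem, hGbd, -⟩ := hIco μ hμIco
  have hkey := key μ hμIco
  refine ⟨by rw [hSdef]; exact hpos, ?_, ?_⟩
  · -- gradient of Jhat is zero
    have hJg : HasGradientAt J (H (θhat μ - θs)) (θhat μ) := by
      have hfun : J = fun θ => Jstar + (1/2) * ⟪θ - θs, H (θ - θs)⟫ := funext hJdef
      rw [hfun]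
      exact quad_grad' θs (θhat μ) H Hsymm Jstar
    have hLg : HasGradientAt (fun θ => Real.log (h θ)) (G (θhat μ)) (θhat μ) :=
      log_grad' h (θhat μ) ((hh.differentiable (by norm_num)).differentiableAt) hpos.ne'
    have hF : HasFDerivAt (Jhat μ)
        (InnerProductSpace.toDual ℝ _ (H (θhat μ - θs))
          - μ • InnerProductSpace.toDual ℝ _ (G (θhat μ))) (θhat μ) := by
      have hfun2 : Jhat μ = fun θ => J θ - μ * Real.log (h θ) := funext (hJhatdef μ)
      rw [hfun2]
      exact hJg.hasFDerivAt.sub ((hLg.hasFDerivAt).const_mul μ)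
    have hGr : HasGradientAt (Jhat μ) (H (θhat μ - θs) - μ • G (θhat μ)) (θhat μ) := by
      rw [hasGradientAt_iff_hasFDerivAt]
      rw [map_sub, map_smul]
      exact hF
    rw [hGr.gradient, hkey, sub_self]
  · -- quadratic error bound
    have hθeq : θhat μ - θs = Heq.symm (μ • G (θhat μ)) := by
      have h1 : Heq (θhat μ - θs) = μ • G (θhat μ) := by rw [hHcoe]; exact hkey
      rw [← h1, Heq.symm_apply_apply]
    have hw2 : (μ / h θs) • (Heq.symm (gradient h θs)) = Heq.symm (μ • G θs) := by
      rw [← map_smul]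
      congr 1
      show (μ / h θs) • gradient h θs = μ • ((h θs)⁻¹ • gradient h θs)
      rw [smul_smul, div_eq_mul_inv]
    have he : θhat μ - θs - (μ / h θs) • (Heq.symm (gradient h θs))
        = Heq.symm (μ • (G (θhat μ) - G θs)) := by
      rw [hθeq, hw2, ← map_sub, ← smul_sub]
    have hnorm1 : ‖θhat μ - θs‖ ≤ ‖HS‖ * (μ * M) := by
      rw [hθeq]
      calc ‖Heq.symm (μ • G (θhat μ))‖ = ‖HS (μ • G (θhat μ))‖ := rfl
        _ ≤ ‖HS‖ * ‖μ • G (θhat μ)‖ := HS.le_opNorm _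
        _ = ‖HS‖ * (μ * ‖G (θhat μ)‖) := by
            rw [norm_smul, Real.norm_eq_abs, abs_of_pos hμ.1]
        _ ≤ ‖HS‖ * (μ * M) := by gcongr <;> exact hμ.1.le <;> exact hμ.1.le
    have hlipd : ‖G (θhat μ) - G θs‖ ≤ (K : ℝ) * ‖θhat μ - θs‖ := by
      have := hlip.dist_le_mul (θhat μ) hmem θs hθst
      rwa [dist_eq_norm, dist_eq_norm] at this
    calc ‖θhat μ - θs - (μ / h θs) • (Heq.symm (gradient h θs))‖
        = ‖HS (μ • (G (θhat μ) - G θs))‖ := by rw [he]; rfl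
      _ ≤ ‖HS‖ * ‖μ • (G (θhat μ) - G θs)‖ := HS.le_opNorm _
      _ = ‖HS‖ * (μ * ‖G (θhat μ) - G θs‖) := by
          rw [norm_smul, Real.norm_eq_abs, abs_of_pos hμ.1]
      _ ≤ ‖HS‖ * (μ * ((K : ℝ) * ‖θhat μ - θs‖)) := by gcongr <;> exact hμ.1.le <;> exact hμ.1.le
      _ ≤ ‖HS‖ * (μ * ((K : ℝ) * (‖HS‖ * (μ * M)))) := by gcongr <;> exact hμ.1.le <;> exact hμ.1.le
      _ = (‖HS‖ * ((K : ℝ) * (‖HS‖ * M))) * μ ^ 2 := by ring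
      _ ≤ C * μ ^ 2 := by
          have h2 : (0:ℝ) ≤ μ ^ 2 := sq_nonneg μ
          have h3 : ‖HS‖ * ((K : ℝ) * (‖HS‖ * M)) ≤ C := by rw [hC]; linarith
          exact mul_le_mul_of_nonneg_right h3 h2
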